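/- Let a, b ∈ ℕ with [a,b] ∉ S₃. If F ∈ full_{a,b}(S₃), then E₁*(F), E₂*(F), ..., E*_{a-1}(F) are all S₂-full sets. -/

import Mathlib

open Finset

/-- `F < G` for finite sets: every element of `F` is below every element of `G`. -/
def FinsetLT (F G : Finset ℕ) : Prop := ∀ x ∈ F, ∀ y ∈ G, x < y

/-- Membership in the Schreier family `S₁`: a finite set of positive integers
with `|F| ≤ min F` (the empty set belongs trivially). -/
def IsSchreier (F : Finset ℕ) : Prop := ∀ n ∈ F, 0 < n ∧ F.card ≤ n

/-- `F` is a union of at most `d` sets `F₁ < F₂ < ⋯`, each in the family `P`. -/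
def Combine (P : Finset ℕ → Prop) (d : ℕ) (F : Finset ℕ) : Prop :=
  ∃ L : List (Finset ℕ), L.length ≤ d ∧ L.Pairwise FinsetLT ∧
    (∀ G ∈ L, P G) ∧ L.foldr (· ∪ ·) ∅ = F

/-- Membership in `S₂`. -/
def MemS2 (F : Finset ℕ) : Prop :=
  F = ∅ ∨ ∃ h : F.Nonempty, Combine IsSchreier (F.min' h) F

/-- Membership in `S₃`. -/
def MemS3 (F : Finset ℕ) : Prop :=
  F = ∅ ∨ ∃ h : F.Nonempty, Combine MemS2 (F.min' h) F

/-- `F` is a maximal member of the family `P` (among sets of positive integers). -/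
def IsFull (P : Finset ℕ → Prop) (F : Finset ℕ) : Prop :=
  P F ∧ ∀ n : ℕ, 0 < n → n ∉ F → ¬ P (insert n F)

/-- `F ∈ full_{a,b}(P)`. -/
def FullAB (P : Finset ℕ → Prop) (a b : ℕ) (F : Finset ℕ) : Prop :=
  P F ∧ F ⊆ Finset.Icc a b ∧ a ∈ F ∧
    ∀ n ∈ Finset.Icc a b, n ∉ F → ¬ P (insert n F)

/-- The tower function `τ`. -/
def tau : ℕ → ℕ → ℕ
  | 0, a => a
  | i + 1, a => 2 ^ tau i a

/-- `E₁(F)`: `F` itself if `|F| ≤ min F`, otherwise the `min F` smallest elements of `F`. -/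
def E1 (F : Finset ℕ) : Finset ℕ :=
  if h : F.Nonempty then ((F.sort (· ≤ ·)).take (F.min' h)).toFinset else ∅

/-- Union of the first `i` greedy pieces. -/
def Eacc : ℕ → Finset ℕ → Finset ℕ
  | 0, _ => ∅
  | i + 1, F => Eacc i F ∪ E1 (F \ Eacc i F)

/-- The `i`-th greedy piece `E_i(F)` (for `i ≥ 1`). -/
def Epiece (i : ℕ) (F : Finset ℕ) : Finset ℕ := E1 (F \ Eacc (i - 1) F)

open Classical in
/-- `E₁*(F)`: `F` itself if `F ∈ S₂`, otherwise `E₁(F) ∪ ⋯ ∪ E_{min F}(F)`. -/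
noncomputable def E1star (F : Finset ℕ) : Finset ℕ :=
  if MemS2 F then F
  else if h : F.Nonempty then Eacc (F.min' h) F else ∅

/-- Union of the first `i` starred greedy pieces. -/
noncomputable def EaccStar : ℕ → Finset ℕ → Finset ℕ
  | 0, _ => ∅
  | i + 1, F => EaccStar i F ∪ E1star (F \ EaccStar i F)

/-- The `i`-th starred greedy piece `E_i*(F)` (for `i ≥ 1`). -/
noncomputable def EpieceStar (i : ℕ) (F : Finset ℕ) : Finset ℕ :=
  E1star (F \ EaccStar (i - 1) F)

/-! ### Auxiliary development -/

/-- `S` is an initial segment of `X`. -/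
def InitSeg (S X : Finset ℕ) : Prop := S ⊆ X ∧ ∀ u ∈ S, ∀ v ∈ X \ S, u < v

lemma initSeg_refl (X : Finset ℕ) : InitSeg X X :=
  ⟨subset_rfl, fun _ _ v hv => absurd hv (by simp)⟩

lemma initSeg_empty (X : Finset ℕ) : InitSeg ∅ X :=
  ⟨empty_subset _, fun u hu => absurd hu (by simp)⟩

lemma InitSeg.trans {S K X : Finset ℕ} (h1 : InitSeg S K) (h2 : InitSeg K X) :
    InitSeg S X := by
  refine ⟨h1.1.trans h2.1, fun u hu v hv => ?_⟩
  rcases mem_sdiff.mp hv with ⟨hvX, hvS⟩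
  by_cases hvK : v ∈ K
  · exact h1.2 u hu v (mem_sdiff.mpr ⟨hvK, hvS⟩)
  · exact h2.2 u (h1.1 hu) v (mem_sdiff.mpr ⟨hvX, hvK⟩)

lemma InitSeg.subset_of_card_le {S T X : Finset ℕ} (hS : InitSeg S X) (hT : InitSeg T X)
    (h : S.card ≤ T.card) : S ⊆ T := by
  intro u hu
  by_contra hu'
  have hsub : T ⊆ S.erase u := by
    intro t ht
    have htS : t ∈ S := by
      by_contra htS
      exact absurd (hS.2 u hu t (mem_sdiff.mpr ⟨hT.1 ht, htS⟩))
        (not_lt.mpr (le_of_lt (hT.2 t ht u (mem_sdiff.mpr ⟨hS.1 hu, hu'⟩))))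
    exact mem_erase.mpr ⟨fun he => hu' (he ▸ ht), htS⟩
  have h2 := card_le_card hsub
  rw [card_erase_of_mem hu] at h2
  have : 0 < S.card := card_pos.mpr ⟨u, hu⟩
  omega

lemma InitSeg.eq_of_card_eq {S T X : Finset ℕ} (hS : InitSeg S X) (hT : InitSeg T X)
    (h : S.card = T.card) : S = T :=
  Subset.antisymm (hS.subset_of_card_le hT h.le) (hT.subset_of_card_le hS h.ge)

lemma InitSeg.min'_eq {S X : Finset ℕ} (h : InitSeg S X) (hS : S.Nonempty) :
    X.min' (hS.mono h.1) = S.min' hS := by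
  apply le_antisymm
  · exact min'_le _ _ (h.1 (min'_mem _ _))
  · by_cases hmem : X.min' (hS.mono h.1) ∈ S
    · exact min'_le _ _ hmem
    · have := h.2 (S.min' hS) (min'_mem _ _) (X.min' (hS.mono h.1))
        (mem_sdiff.mpr ⟨min'_mem _ _, hmem⟩)
      exact this.le
/-! ### Basic facts about `E1` -/

lemma E1_empty : E1 ∅ = ∅ := by simp [E1]

lemma E1_subset (G : Finset ℕ) : E1 G ⊆ G := by
  unfold E1
  split
  · intro x hx
    rw [List.mem_toFinset] at hx
    exact (Finset.mem_sort (α := ℕ) (· ≤ ·)).mp (List.mem_of_mem_take hx)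
  · exact empty_subset _

lemma E1_card (G : Finset ℕ) (h : G.Nonempty) :
    (E1 G).card = min (G.min' h) G.card := by
  unfold E1
  rw [dif_pos h]
  have hnd : ((G.sort (· ≤ ·)).take (G.min' h)).Nodup :=
    (List.take_sublist _ _).nodup (Finset.sort_nodup _ _)
  rw [List.toFinset_card_of_nodup hnd, List.length_take, Finset.length_sort]

lemma E1_initSeg (G : Finset ℕ) : InitSeg (E1 G) G := by
  refine ⟨E1_subset G, ?_⟩
  intro u hu v hv
  rcases mem_sdiff.mp hv with ⟨hvG, hvE⟩
  rcases Finset.eq_empty_or_nonempty G with rfl | h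
  · simp at hvG
  unfold E1 at hu hvE
  rw [dif_pos h] at hu hvE
  rw [List.mem_toFinset] at hu hvE
  set l := G.sort (· ≤ ·) with hl
  have hvl : v ∈ l := (Finset.mem_sort (α := ℕ) (· ≤ ·)).mpr hvG
  have hsplit : l = l.take (G.min' h) ++ l.drop (G.min' h) :=
    (List.take_append_drop _ _).symm
  have hvd : v ∈ l.drop (G.min' h) := by
    rw [hsplit, List.mem_append] at hvl
    exact hvl.resolve_left hvE
  have hpw : l.Pairwise (· ≤ ·) := Finset.pairwise_sort _ _
  have : ∀ x ∈ l.take (G.min' h), ∀ y ∈ l.drop (G.min' h), x ≤ y := by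
    rw [hsplit, List.pairwise_append] at hpw
    exact hpw.2.2
  have hle : u ≤ v := this u hu v hvd
  rcases lt_or_eq_of_le hle with hlt | rfl
  · exact hlt
  · exact absurd hu hvE

lemma E1_eq_self_of_card_le (G : Finset ℕ) (h : G.Nonempty) (hc : G.card ≤ G.min' h) :
    E1 G = G := by
  apply Finset.eq_of_subset_of_card_le (E1_subset G)
  rw [E1_card G h]
  omega

lemma E1_card_of_min'_le (G : Finset ℕ) (h : G.Nonempty) (hc : G.min' h ≤ G.card) :
    (E1 G).card = G.min' h := by
  rw [E1_card G h]; omega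
/-! ### Basic facts about `Eacc` -/

lemma min'_le_min' {B C : Finset ℕ} (h : B ⊆ C) (hB : B.Nonempty) :
    C.min' (hB.mono h) ≤ B.min' hB := min'_le _ _ (h (min'_mem _ _))

lemma Eacc_succ (j : ℕ) (X : Finset ℕ) :
    Eacc (j + 1) X = Eacc j X ∪ E1 (X \ Eacc j X) := rfl

lemma Eacc_subset (j : ℕ) (X : Finset ℕ) : Eacc j X ⊆ X := by
  induction j with
  | zero => exact empty_subset _
  | succ j ih =>
    rw [Eacc_succ]
    exact union_subset ih ((E1_subset _).trans (sdiff_subset))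

lemma Eacc_mono_succ (j : ℕ) (X : Finset ℕ) : Eacc j X ⊆ Eacc (j + 1) X :=
  subset_union_left

lemma Eacc_mono {j j' : ℕ} (h : j ≤ j') (X : Finset ℕ) : Eacc j X ⊆ Eacc j' X := by
  induction j' with
  | zero => rw [Nat.le_zero.mp h]
  | succ j' ih =>
    rcases Nat.lt_or_ge j (j' + 1) with h' | h'
    · exact (ih (Nat.lt_succ_iff.mp h')).trans (Eacc_mono_succ j' X)
    · rw [Nat.le_antisymm h h']

lemma Eacc_initSeg (j : ℕ) (X : Finset ℕ) : InitSeg (Eacc j X) X := by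
  induction j with
  | zero => exact initSeg_empty X
  | succ j ih =>
    refine ⟨Eacc_subset _ _, fun u hu v hv => ?_⟩
    rcases mem_sdiff.mp hv with ⟨hvX, hvE⟩
    rw [Eacc_succ, mem_union] at hvE hu
    push_neg at hvE
    rcases hu with hu | hu
    · exact ih.2 u hu v (mem_sdiff.mpr ⟨hvX, fun hh => hvE.1 hh⟩)
    · exact (E1_initSeg (X \ Eacc j X)).2 u hu v
        (mem_sdiff.mpr ⟨mem_sdiff.mpr ⟨hvX, hvE.1⟩, hvE.2⟩)

lemma Eacc_card_succ (j : ℕ) (X : Finset ℕ) :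
    (Eacc (j + 1) X).card = (Eacc j X).card + (E1 (X \ Eacc j X)).card := by
  rw [Eacc_succ]
  apply card_union_of_disjoint
  exact Finset.disjoint_left.mpr fun x hx hx' =>
    (mem_sdiff.mp (E1_subset _ hx')).2 hx

lemma Eacc_stable {j j' : ℕ} (h : j ≤ j') (X : Finset ℕ) (hX : Eacc j X = X) :
    Eacc j' X = X := by
  induction j' with
  | zero => rw [Nat.le_zero.mp h] at hX; exact hX
  | succ j' ih =>
    rcases Nat.lt_or_ge j (j' + 1) with h' | h'
    · have := ih (Nat.lt_succ_iff.mp h')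
      rw [Eacc_succ, this, sdiff_self]
      simp [E1_empty, this]
    · rw [← Nat.le_antisymm h h']; exact hX

/-- A Schreier initial segment of `R` is contained in `E1 R`. -/
lemma schreier_subset_E1 {K R : Finset ℕ} (hK : IsSchreier K) (hI : InitSeg K R) :
    K ⊆ E1 R := by
  rcases K.eq_empty_or_nonempty with rfl | hKne
  · exact empty_subset _
  have hRne : R.Nonempty := hKne.mono hI.1
  have hmin : R.min' hRne = K.min' hKne := hI.min'_eq hKne
  have hcard : K.card ≤ (E1 R).card := by
    rw [E1_card R hRne, hmin]
    have h1 : K.card ≤ K.min' hKne := (hK _ (min'_mem _ _)).2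
    have h2 : K.card ≤ R.card := card_le_card hI.1
    omega
  exact hI.subset_of_card_le (E1_initSeg R) hcard
/-! ### foldr-union helpers and a generic greedy covering lemma -/

lemma mem_foldr_union {L : List (Finset ℕ)} {x : ℕ} :
    x ∈ L.foldr (· ∪ ·) ∅ ↔ ∃ Q ∈ L, x ∈ Q := by
  induction L with
  | nil => simp
  | cons Q M ih => simp [ih]

lemma foldr_union_subset {L : List (Finset ℕ)} {X : Finset ℕ} (h : ∀ Q ∈ L, Q ⊆ X) :
    L.foldr (· ∪ ·) ∅ ⊆ X := by
  intro x hx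
  rcases mem_foldr_union.mp hx with ⟨Q, hQ, hxQ⟩
  exact h Q hQ hxQ

lemma foldr_union_append (L M : List (Finset ℕ)) :
    (L ++ M).foldr (· ∪ ·) ∅ = L.foldr (· ∪ ·) ∅ ∪ M.foldr (· ∪ ·) ∅ := by
  induction L with
  | nil => simp
  | cons Q L ih => simp [ih, union_assoc]

/-- Generic greedy covering lemma. -/
lemma greedy_cover (P : Finset ℕ → Prop) (step : Finset ℕ → Finset ℕ) (X : Finset ℕ)
    (A : ℕ → Finset ℕ)
    (hAsucc : ∀ j, A (j + 1) = A j ∪ step (X \ A j))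
    (hstep : ∀ K R, P K → InitSeg K R → K ⊆ step R)
    (hhered : ∀ K J, P K → J ⊆ K → P J) :
    ∀ (M : List (Finset ℕ)), M.Pairwise FinsetLT → (∀ Q ∈ M, P Q) → (∀ Q ∈ M, Q ⊆ X) →
      ∀ j, X ⊆ A j ∪ M.foldr (· ∪ ·) ∅ → X ⊆ A (j + M.length) := by
  intro M
  induction M with
  | nil => intro _ _ _ j hsub; simpa using hsub
  | cons Q M ih =>
    intro hpw hm hQX j hsub
    have hQA : Q ⊆ A (j + 1) := by
      set K := Q \ A j with hK
      have hPK : P K := hhered Q K (hm Q (by simp)) sdiff_subset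
      have hIS : InitSeg K (X \ A j) := by
        constructor
        · intro x hx
          rcases mem_sdiff.mp hx with ⟨hxQ, hxA⟩
          exact mem_sdiff.mpr ⟨hQX Q (by simp) hxQ, hxA⟩
        · intro u hu v hv
          rcases mem_sdiff.mp hv with ⟨hvXA, hvK⟩
          rcases mem_sdiff.mp hvXA with ⟨hvX, hvA⟩
          have hvQ : v ∉ Q := fun hh => hvK (mem_sdiff.mpr ⟨hh, hvA⟩)
          rcases mem_foldr_union.mp ((mem_union.mp (hsub hvX)).resolve_left hvA)
            with ⟨G, hG, hvG⟩
          rcases List.mem_cons.mp hG with rfl | hG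
          · exact absurd hvG hvQ
          · exact (List.pairwise_cons.mp hpw).1 G hG u (mem_sdiff.mp hu).1 v hvG
      have : K ⊆ step (X \ A j) := hstep K (X \ A j) hPK hIS
      rw [hAsucc j]
      intro x hx
      by_cases hxA : x ∈ A j
      · exact mem_union_left _ hxA
      · exact mem_union_right _ (this (mem_sdiff.mpr ⟨hx, hxA⟩))
    have hsub' : X ⊆ A (j + 1) ∪ M.foldr (· ∪ ·) ∅ := by
      intro x hx
      rcases mem_union.mp (hsub hx) with hx' | hx'
      · exact mem_union_left _ (by rw [hAsucc j]; exact mem_union_left _ hx')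
      · rcases mem_foldr_union.mp hx' with ⟨G, hG, hxG⟩
        rcases List.mem_cons.mp hG with rfl | hG
        · exact mem_union_left _ (hQA hxG)
        · exact mem_union_right _ (mem_foldr_union.mpr ⟨G, hG, hxG⟩)
    have := ih (List.pairwise_cons.mp hpw).2 (fun G hG => hm G (by simp [hG]))
      (fun G hG => hQX G (by simp [hG])) (j + 1) hsub'
    have heq : j + 1 + M.length = j + (Q :: M).length := by simp; omega
    rwa [heq] at this
/-! ### Hereditary properties and greedy completeness for `S₂` -/

lemma IsSchreier.subset {K J : Finset ℕ} (hK : IsSchreier K) (h : J ⊆ K) : IsSchreier J :=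
  fun n hn => ⟨(hK n (h hn)).1, (card_le_card h).trans (hK n (h hn)).2⟩

lemma Combine.mono {P : Finset ℕ → Prop} {d d' : ℕ} {F : Finset ℕ}
    (h : Combine P d F) (hd : d ≤ d') : Combine P d' F := by
  rcases h with ⟨L, h1, h2, h3, h4⟩
  exact ⟨L, h1.trans hd, h2, h3, h4⟩

lemma Combine.inter {d : ℕ} {F B : Finset ℕ} (h : Combine IsSchreier d F) :
    Combine IsSchreier d (F ∩ B) := by
  rcases h with ⟨L, h1, h2, h3, h4⟩
  refine ⟨L.map (· ∩ B), by simpa using h1, ?_, ?_, ?_⟩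
  · exact List.Pairwise.map _ (fun {G₁ G₂} hlt x hx y hy =>
      hlt x (mem_inter.mp hx).1 y (mem_inter.mp hy).1) h2
  · intro G hG
    rcases List.mem_map.mp hG with ⟨K, hK, rfl⟩
    exact (h3 K hK).subset inter_subset_left
  · rw [← h4]
    clear h4 h1 h2 h3
    induction L with
    | nil => simp
    | cons Q M ih => simp [ih, union_inter_distrib_right]

lemma MemS2.subset {F B : Finset ℕ} (h : MemS2 F) (hB : B ⊆ F) : MemS2 B := by
  rcases B.eq_empty_or_nonempty with rfl | hBne
  · exact Or.inl rfl
  rcases h with rfl | ⟨hFne, hc⟩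
  · rw [Finset.subset_empty] at hB
    subst hB
    exact absurd hBne (by simp)
  refine Or.inr ⟨hBne, ?_⟩
  have := hc.inter (B := B)
  rw [inter_eq_right.mpr hB] at this
  exact this.mono (min'_le_min' hB hBne)

lemma MemS2_empty : MemS2 ∅ := Or.inl rfl

lemma MemS2_pos {F : Finset ℕ} (h : MemS2 F) : ∀ x ∈ F, 0 < x := by
  rcases h with rfl | ⟨hne, L, h1, h2, h3, h4⟩
  · simp
  intro x hx
  rcases mem_foldr_union.mp (h4 ▸ hx) with ⟨Q, hQ, hxQ⟩
  exact (h3 Q hQ x hxQ).1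

lemma MemS2_singleton {n : ℕ} (hn : 0 < n) : MemS2 {n} := by
  refine Or.inr ⟨⟨n, by simp⟩, ⟨[{n}], ?_, ?_, ?_, by simp⟩⟩
  · simp only [List.length_singleton, Finset.min'_singleton]
    omega
  · simp
  · intro G hG
    simp only [List.mem_singleton] at hG
    subst hG
    intro m hm
    simp only [Finset.mem_singleton] at hm
    subst hm
    exact ⟨hn, by simp only [Finset.card_singleton]; omega⟩

/-- Greedy completeness for `S₂`: greedy Schreier decomposition exhausts any `S₂` set. -/
lemma eacc_exhausts {X : Finset ℕ} (h : MemS2 X) (hX : X.Nonempty) :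
    Eacc (X.min' hX) X = X := by
  rcases h with rfl | ⟨hne, L, h1, h2, h3, h4⟩
  · exact absurd hX (by simp)
  have hQX : ∀ Q ∈ L, Q ⊆ X := fun Q hQ => by
    rw [← h4]; intro x hx; exact mem_foldr_union.mpr ⟨Q, hQ, hx⟩
  have := greedy_cover IsSchreier E1 X (fun j => Eacc j X) (fun j => Eacc_succ j X)
    (fun K R hK hI => schreier_subset_E1 hK hI)
    (fun K J hK hJ => hK.subset hJ) L h2 h3 hQX 0 (by simp [h4])
  have hsub : X ⊆ Eacc L.length X := by simpa using this
  have : Eacc L.length X = X := Subset.antisymm (Eacc_subset _ _) hsub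
  exact Eacc_stable h1 X this
/-! ### The greedy pieces are Schreier; membership of `Eacc` in `S₂` -/

lemma IsSchreier_E1 {G : Finset ℕ} (hpos : ∀ x ∈ G, 0 < x) : IsSchreier (E1 G) := by
  rcases G.eq_empty_or_nonempty with rfl | hne
  · rw [E1_empty]; intro n hn; simp at hn
  intro n hn
  refine ⟨hpos n (E1_subset G hn), ?_⟩
  calc (E1 G).card ≤ G.min' hne := by rw [E1_card G hne]; omega
    _ ≤ n := min'_le _ _ (E1_subset G hn)

lemma combine_Eacc {X : Finset ℕ} (hpos : ∀ x ∈ X, 0 < x) (j : ℕ) :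
    Combine IsSchreier j (Eacc j X) := by
  induction j with
  | zero => exact ⟨[], by simp, by simp, by simp, by simp [Eacc]⟩
  | succ j ih =>
    rcases ih with ⟨L, h1, h2, h3, h4⟩
    refine ⟨L ++ [E1 (X \ Eacc j X)], by simpa using h1, ?_, ?_, ?_⟩
    · rw [List.pairwise_append]
      refine ⟨h2, by simp, ?_⟩
      intro G hG G' hG' u hu v hv
      simp only [List.mem_singleton] at hG'
      subst hG'
      have huE : u ∈ Eacc j X := by
        rw [← h4]; exact mem_foldr_union.mpr ⟨G, hG, hu⟩
      have hvE : v ∈ X \ Eacc j X := E1_subset _ hv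
      exact (Eacc_initSeg j X).2 u huE v hvE
    · intro G hG
      rcases List.mem_append.mp hG with hG | hG
      · exact h3 G hG
      · simp only [List.mem_singleton] at hG
        subst hG
        exact IsSchreier_E1 (fun x hx => hpos x (mem_sdiff.mp hx).1)
    · rw [foldr_union_append, h4]
      simp [Eacc_succ]

lemma MemS2_Eacc {X : Finset ℕ} (hpos : ∀ x ∈ X, 0 < x) {j : ℕ}
    (hj : ∀ h : X.Nonempty, j ≤ X.min' h) : MemS2 (Eacc j X) := by
  rcases (Eacc j X).eq_empty_or_nonempty with he | hne
  · rw [he]; exact MemS2_empty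
  refine Or.inr ⟨hne, ?_⟩
  have hXne : X.Nonempty := hne.mono (Eacc_subset j X)
  have hmin : X.min' hXne = (Eacc j X).min' hne := (Eacc_initSeg j X).min'_eq hne
  exact (combine_Eacc hpos j).mono (by rw [← hmin]; exact hj hXne)
/-! ### Facts about `E1star` -/

lemma E1star_empty : E1star ∅ = ∅ := by simp [E1star, MemS2_empty]

lemma E1star_of_mem {G : Finset ℕ} (h : MemS2 G) : E1star G = G := by simp [E1star, h]

lemma E1star_of_not_mem {G : Finset ℕ} (h : ¬ MemS2 G) (hne : G.Nonempty) :
    E1star G = Eacc (G.min' hne) G := by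
  rw [E1star, if_neg h, dif_pos hne]

lemma E1star_subset (G : Finset ℕ) : E1star G ⊆ G := by
  by_cases h : MemS2 G
  · rw [E1star_of_mem h]
  rcases G.eq_empty_or_nonempty with rfl | hne
  · rw [E1star_empty]
  rw [E1star_of_not_mem h hne]
  exact Eacc_subset _ _

lemma E1star_initSeg (G : Finset ℕ) : InitSeg (E1star G) G := by
  by_cases h : MemS2 G
  · rw [E1star_of_mem h]; exact initSeg_refl G
  rcases G.eq_empty_or_nonempty with rfl | hne
  · rw [E1star_empty]; exact initSeg_empty _
  rw [E1star_of_not_mem h hne]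
  exact Eacc_initSeg _ _

lemma MemS2_E1star {G : Finset ℕ} (hpos : ∀ x ∈ G, 0 < x) : MemS2 (E1star G) := by
  by_cases h : MemS2 G
  · rw [E1star_of_mem h]; exact h
  rcases G.eq_empty_or_nonempty with rfl | hne
  · rw [E1star_empty]; exact MemS2_empty
  rw [E1star_of_not_mem h hne]
  exact MemS2_Eacc hpos (fun h' => (min'_le_min' subset_rfl h').trans le_rfl)

lemma not_memS2_E1star_ne {G : Finset ℕ} (hpos : ∀ x ∈ G, 0 < x) (h : ¬ MemS2 G) :
    E1star G ≠ G := fun he => h (he ▸ MemS2_E1star hpos)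

/-- An `S₂` initial segment of `R` is contained in `E1star R`. -/
lemma memS2_subset_E1star {K R : Finset ℕ} (hK : MemS2 K) (hI : InitSeg K R) :
    K ⊆ E1star R := by
  by_cases hR : MemS2 R
  · rw [E1star_of_mem hR]; exact hI.1
  rcases K.eq_empty_or_nonempty with rfl | hKne
  · exact empty_subset _
  have hRne : R.Nonempty := hKne.mono hI.1
  rw [E1star_of_not_mem hR hRne]
  have hmin : R.min' hRne = K.min' hKne := hI.min'_eq hKne
  have hKex : Eacc (K.min' hKne) K = K := eacc_exhausts hK hKne
  -- comparison induction
  have key : ∀ j, K ⊆ Eacc j R ∨ (Eacc j K).card ≤ (Eacc j R).card := by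
    intro j
    induction j with
    | zero => exact Or.inr le_rfl
    | succ j ih =>
      rcases ih with ih | ih
      · exact Or.inl (ih.trans (Eacc_mono_succ j R))
      rcases le_or_gt K.card (Eacc j R).card with hle | hlt
      · exact Or.inl ((hI.subset_of_card_le (Eacc_initSeg j R) hle).trans
          (Eacc_mono_succ j R))
      -- remainders nonempty
      have hremK : (K \ Eacc j K).Nonempty := by
        rw [sdiff_nonempty]
        intro hsub
        have := card_le_card hsub
        omega
      have hremR : (R \ Eacc j R).Nonempty := by
        rw [sdiff_nonempty]
        intro hsub
        have h1 := card_le_card hsub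
        have h2 := card_le_card hI.1
        omega
      -- Eacc j K is an initial segment of R, contained in Eacc j R
      have hIS1 : InitSeg (Eacc j K) R := (Eacc_initSeg j K).trans hI
      have hsub1 : Eacc j K ⊆ Eacc j R :=
        hIS1.subset_of_card_le (Eacc_initSeg j R) ih
      -- min' comparison
      have hKSne : (K \ Eacc j K).Nonempty := hremK
      have hsub2 : R \ Eacc j R ⊆ R \ Eacc j K := sdiff_subset_sdiff subset_rfl hsub1
      have hRKne : (R \ Eacc j K).Nonempty := hremR.mono hsub2
      have hminKS : (R \ Eacc j K).min' hRKne = (K \ Eacc j K).min' hKSne := by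
        apply InitSeg.min'_eq
        constructor
        · exact sdiff_subset_sdiff hI.1 subset_rfl
        · intro u hu v hv
          rcases mem_sdiff.mp hv with ⟨hv1, hv2⟩
          rcases mem_sdiff.mp hv1 with ⟨hvR, hvE⟩
          have hvK : v ∉ K := fun hh => hv2 (mem_sdiff.mpr ⟨hh, hvE⟩)
          exact hI.2 u (mem_sdiff.mp hu).1 v (mem_sdiff.mpr ⟨hvR, hvK⟩)
      have hminle : (K \ Eacc j K).min' hKSne ≤ (R \ Eacc j R).min' hremR := by
        rw [← hminKS]
        exact min'_le_min' hsub2 hremR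
      -- compare step sizes
      rcases le_or_gt (R \ Eacc j R).card ((R \ Eacc j R).min' hremR) with hcap | hcap
      · -- greedy on R swallows the whole remainder
        left
        have : E1 (R \ Eacc j R) = R \ Eacc j R := E1_eq_self_of_card_le _ hremR hcap
        rw [Eacc_succ, this]
        intro x hx
        by_cases hxE : x ∈ Eacc j R
        · exact mem_union_left _ hxE
        · exact mem_union_right _ (mem_sdiff.mpr ⟨hI.1 hx, hxE⟩)
      · right
        rw [Eacc_card_succ, Eacc_card_succ]
        have e1 : (E1 (R \ Eacc j R)).card = (R \ Eacc j R).min' hremR :=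
          E1_card_of_min'_le _ hremR hcap.le
        have e2 : (E1 (K \ Eacc j K)).card ≤ (K \ Eacc j K).min' hKSne := by
          rw [E1_card _ hKSne]; omega
        omega
  rcases key (R.min' hRne) with h' | h'
  · exact h'
  rw [hmin] at h' ⊢
  rw [hKex] at h'
  exact (hI.subset_of_card_le (Eacc_initSeg _ R) h')
/-! ### Facts about `EaccStar` -/

lemma EaccStar_succ (j : ℕ) (X : Finset ℕ) :
    EaccStar (j + 1) X = EaccStar j X ∪ E1star (X \ EaccStar j X) := rfl

lemma EaccStar_subset (j : ℕ) (X : Finset ℕ) : EaccStar j X ⊆ X := by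
  induction j with
  | zero => exact empty_subset _
  | succ j ih =>
    rw [EaccStar_succ]
    exact union_subset ih ((E1star_subset _).trans (sdiff_subset))

lemma EaccStar_mono_succ (j : ℕ) (X : Finset ℕ) : EaccStar j X ⊆ EaccStar (j + 1) X :=
  subset_union_left

lemma EaccStar_initSeg (j : ℕ) (X : Finset ℕ) : InitSeg (EaccStar j X) X := by
  induction j with
  | zero => exact initSeg_empty X
  | succ j ih =>
    refine ⟨EaccStar_subset _ _, fun u hu v hv => ?_⟩
    rcases mem_sdiff.mp hv with ⟨hvX, hvE⟩
    rw [EaccStar_succ, mem_union] at hvE hu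
    push_neg at hvE
    rcases hu with hu | hu
    · exact ih.2 u hu v (mem_sdiff.mpr ⟨hvX, fun hh => hvE.1 hh⟩)
    · exact (E1star_initSeg (X \ EaccStar j X)).2 u hu v
        (mem_sdiff.mpr ⟨mem_sdiff.mpr ⟨hvX, hvE.1⟩, hvE.2⟩)

lemma EaccStar_stable {j j' : ℕ} (h : j ≤ j') (X : Finset ℕ) (hX : EaccStar j X = X) :
    EaccStar j' X = X := by
  induction j' with
  | zero => rw [Nat.le_zero.mp h] at hX; exact hX
  | succ j' ih =>
    rcases Nat.lt_or_ge j (j' + 1) with h' | h'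
    · have := ih (Nat.lt_succ_iff.mp h')
      rw [EaccStar_succ, this, sdiff_self]
      simp [E1star_empty, this]
    · rw [← Nat.le_antisymm h h']; exact hX

/-- Greedy completeness for `S₃`. -/
lemma eaccStar_exhausts {X : Finset ℕ} (h : MemS3 X) (hX : X.Nonempty) :
    EaccStar (X.min' hX) X = X := by
  rcases h with rfl | ⟨hne, L, h1, h2, h3, h4⟩
  · exact absurd hX (by simp)
  have hQX : ∀ Q ∈ L, Q ⊆ X := fun Q hQ => by
    rw [← h4]; intro x hx; exact mem_foldr_union.mpr ⟨Q, hQ, hx⟩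
  have := greedy_cover MemS2 E1star X (fun j => EaccStar j X) (fun j => EaccStar_succ j X)
    (fun K R hK hI => memS2_subset_E1star hK hI)
    (fun K J hK hJ => hK.subset hJ) L h2 h3 hQX 0 (by simp [h4])
  have hsub : X ⊆ EaccStar L.length X := by simpa using this
  have : EaccStar L.length X = X := Subset.antisymm (EaccStar_subset _ _) hsub
  exact EaccStar_stable h1 X this

lemma combine_EaccStar {X : Finset ℕ} (hpos : ∀ x ∈ X, 0 < x) (j : ℕ) :
    Combine MemS2 j (EaccStar j X) := by
  induction j with
  | zero => exact ⟨[], by simp, by simp, by simp, by simp [EaccStar]⟩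
  | succ j ih =>
    rcases ih with ⟨L, h1, h2, h3, h4⟩
    refine ⟨L ++ [E1star (X \ EaccStar j X)], by simpa using h1, ?_, ?_, ?_⟩
    · rw [List.pairwise_append]
      refine ⟨h2, by simp, ?_⟩
      intro G hG G' hG' u hu v hv
      simp only [List.mem_singleton] at hG'
      subst hG'
      have huE : u ∈ EaccStar j X := by
        rw [← h4]; exact mem_foldr_union.mpr ⟨G, hG, hu⟩
      have hvE : v ∈ X \ EaccStar j X := E1star_subset _ hv
      exact (EaccStar_initSeg j X).2 u huE v hvE
    · intro G hG
      rcases List.mem_append.mp hG with hG | hG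
      · exact h3 G hG
      · simp only [List.mem_singleton] at hG
        subst hG
        exact MemS2_E1star (fun x hx => hpos x (mem_sdiff.mp hx).1)
    · rw [foldr_union_append, h4]
      simp [EaccStar_succ]
/-! ### The extension lemma -/

lemma subset_foldr_union {L : List (Finset ℕ)} {Q : Finset ℕ} (h : Q ∈ L) :
    Q ⊆ L.foldr (· ∪ ·) ∅ := fun x hx => mem_foldr_union.mpr ⟨Q, h, hx⟩

lemma FinsetLT.mono {G G' Q Q' : Finset ℕ} (h : FinsetLT G Q) (hG : G' ⊆ G) (hQ : Q' ⊆ Q) :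
    FinsetLT G' Q' := fun x hx y hy => h x (hG hx) y (hQ hy)

/-- inserting an element above some element of an `S₂` set, into the part above it -/
lemma memS2_insert_filter {Q : Finset ℕ} (hQ : MemS2 Q) {n u : ℕ} (hu : u ∈ Q)
    (hun : u < n) : MemS2 (insert n (Q.filter (n < ·))) := by
  set B := Q.filter (n < ·) with hB
  have hnpos : 0 < n := by
    have := MemS2_pos hQ u hu
    omega
  rcases B.eq_empty_or_nonempty with he | hBne
  · rw [he]; exact MemS2_singleton hnpos
  have hQne : Q.Nonempty := ⟨u, hu⟩
  have hBgt : ∀ x ∈ B, n < x := fun x hx => (mem_filter.mp hx).2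
  have hmin : (insert n B).min' (insert_nonempty n B) = n := by
    rw [min'_insert _ _ hBne]
    have : n ≤ B.min' hBne := (hBgt _ (min'_mem _ _)).le
    omega
  refine Or.inr ⟨insert_nonempty n B, ?_⟩
  rw [hmin]
  rcases hQ with rfl | ⟨hne, hc⟩
  · simp at hu
  have hcB : Combine IsSchreier (Q.min' hne) B := by
    have := hc.inter (B := B)
    rwa [inter_eq_right.mpr (filter_subset _ _)] at this
  rcases hcB with ⟨L, h1, h2, h3, h4⟩
  refine ⟨{n} :: L, ?_, ?_, ?_, ?_⟩
  · have : Q.min' hne ≤ u := min'_le _ _ hu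
    simp only [List.length_cons]
    omega
  · rw [List.pairwise_cons]
    refine ⟨?_, h2⟩
    intro G hG x hx y hy
    simp only [Finset.mem_singleton] at hx
    subst hx
    exact hBgt y (h4 ▸ subset_foldr_union hG hy)
  · intro G hG
    rcases List.mem_cons.mp hG with rfl | hG
    · intro m hm
      simp only [Finset.mem_singleton] at hm
      subst hm
      exact ⟨hnpos, by simp only [Finset.card_singleton]; omega⟩
    · exact h3 G hG
  · simp only [List.foldr_cons, h4]
    ext x; simp

/-- inserting a separated element into a decomposition -/
lemma ins_lemma {n : ℕ} (hn : 0 < n) :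
    ∀ (L : List (Finset ℕ)), L.Pairwise FinsetLT → (∀ Q ∈ L, MemS2 Q) →
      (∀ Q ∈ L, (∀ x ∈ Q, x < n) ∨ (∀ x ∈ Q, n < x)) →
      ∃ L' : List (Finset ℕ), L'.length = L.length + 1 ∧ L'.Pairwise FinsetLT ∧
        (∀ G ∈ L', MemS2 G) ∧ L'.foldr (· ∪ ·) ∅ = insert n (L.foldr (· ∪ ·) ∅) := by
  intro L
  induction L with
  | nil =>
    intro _ _ _
    exact ⟨[{n}], by simp, by simp, by simpa using MemS2_singleton hn, by simp⟩
  | cons Q M ih =>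
    intro hpw hmem hside
    rcases List.pairwise_cons.mp hpw with ⟨hQM, hpwM⟩
    by_cases hlt : ∀ x ∈ Q, x < n
    · rcases ih hpwM (fun G hG => hmem G (by simp [hG]))
        (fun G hG => hside G (by simp [hG])) with ⟨M', hm1, hm2, hm3, hm4⟩
      refine ⟨Q :: M', by simpa using hm1, ?_, ?_, ?_⟩
      · rw [List.pairwise_cons]
        refine ⟨?_, hm2⟩
        intro G hG x hx y hy
        have : y ∈ insert n (M.foldr (· ∪ ·) ∅) := hm4 ▸ subset_foldr_union hG hy
        rcases mem_insert.mp this with rfl | hyM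
        · exact hlt x hx
        · rcases mem_foldr_union.mp hyM with ⟨G', hG', hyG'⟩
          exact hQM G' hG' x hx y hyG'
      · intro G hG
        rcases List.mem_cons.mp hG with rfl | hG
        · exact hmem G (by simp)
        · exact hm3 G hG
      · simp only [List.foldr_cons, hm4]
        ext x; simp [or_comm, or_assoc, or_left_comm]
    · push_neg at hlt
      rcases hlt with ⟨u, hu, hun⟩
      have hQgt : ∀ x ∈ Q, n < x :=
        (hside Q (by simp)).resolve_left (by push_neg; exact ⟨u, hu, hun⟩)
      refine ⟨{n} :: Q :: M, by simp, ?_, ?_, ?_⟩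
      · rw [List.pairwise_cons]
        refine ⟨?_, hpw⟩
        intro G hG x hx y hy
        simp only [Finset.mem_singleton] at hx
        subst hx
        rcases List.mem_cons.mp hG with rfl | hG
        · exact hQgt y hy
        · exact lt_trans (hQgt u hu) (hQM G hG u hu y hy)
      · intro G hG
        rcases List.mem_cons.mp hG with rfl | hG
        · exact MemS2_singleton hn
        · exact hmem G hG
      · simp only [List.foldr_cons]
        ext x; simp

/-- The extension lemma: a set in `S₃` with a spare piece can absorb any new point
above its minimum. -/
lemma ext_lemma {F : Finset ℕ} {e n : ℕ} (hC : Combine MemS2 e F) (hFne : F.Nonempty)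
    (hn : F.min' hFne < n) (hnF : n ∉ F) (he : e + 1 ≤ F.min' hFne) :
    MemS3 (insert n F) := by
  have hnpos : 0 < n := lt_of_le_of_lt (Nat.zero_le _) hn
  have hne' : (insert n F).Nonempty := insert_nonempty _ _
  have hmin : (insert n F).min' hne' = F.min' hFne := by
    rw [min'_insert _ _ hFne]
    omega
  refine Or.inr ⟨hne', ?_⟩
  rw [hmin]
  rcases hC with ⟨L, h1, h2, h3, h4⟩
  by_cases hstraddle : ∃ Q ∈ L, (∃ u ∈ Q, u < n) ∧ (∃ v ∈ Q, n < v)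
  · rcases hstraddle with ⟨Q, hQL, ⟨u, hu, hun⟩, ⟨v, hv, hnv⟩⟩
    rcases List.append_of_mem hQL with ⟨s, t, rfl⟩
    rw [List.pairwise_append] at h2
    rcases h2 with ⟨h2s, h2Qt, h2cross⟩
    rcases List.pairwise_cons.mp h2Qt with ⟨hQt, h2t⟩
    set A := Q.filter (· < n) with hA
    set B := Q.filter (n < ·) with hB
    set C := insert n B with hC'
    have hABQ : ∀ x ∈ Q, x ∈ A ∨ x ∈ B := by
      intro x hx
      have hxn : x ≠ n := fun hh => hnF (h4 ▸ subset_foldr_union hQL (hh ▸ hx))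
      rcases lt_or_gt_of_ne hxn with h' | h'
      · exact Or.inl (mem_filter.mpr ⟨hx, h'⟩)
      · exact Or.inr (mem_filter.mpr ⟨hx, h'⟩)
    have hQmem : MemS2 Q := h3 Q hQL
    refine ⟨s ++ A :: C :: t, ?_, ?_, ?_, ?_⟩
    · simp only [List.length_append, List.length_cons] at h1 ⊢
      omega
    · rw [List.pairwise_append]
      refine ⟨h2s, ?_, ?_⟩
      · rw [List.pairwise_cons]
        constructor
        · intro G hG x hx y hy
          have hxQ : x ∈ Q := (filter_subset _ _) hx
          have hxn : x < n := (mem_filter.mp hx).2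
          rcases List.mem_cons.mp hG with rfl | hG
          · rcases mem_insert.mp hy with rfl | hyB
            · exact hxn
            · exact lt_trans hxn (mem_filter.mp hyB).2
          · exact hQt G hG x hxQ y hy
        · rw [List.pairwise_cons]
          refine ⟨?_, h2t⟩
          intro G hG x hx y hy
          rcases mem_insert.mp hx with rfl | hxB
          · exact lt_trans hnv (hQt G hG v hv y hy)
          · exact hQt G hG x ((filter_subset _ _) hxB) y hy
      · intro G hG G' hG' x hx y hy
        have hbase := h2cross G hG
        rcases List.mem_cons.mp hG' with rfl | hG'
        · exact hbase Q (by simp) x hx y ((filter_subset _ _) hy)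
        rcases List.mem_cons.mp hG' with rfl | hG'
        · rcases mem_insert.mp hy with rfl | hyB
          · exact lt_trans (hbase Q (by simp) x hx u hu) hun
          · exact hbase Q (by simp) x hx y ((filter_subset _ _) hyB)
        · exact hbase G' (by simp [hG']) x hx y hy
    · intro G hG
      rcases List.mem_append.mp hG with hG | hG
      · exact h3 G (by simp [hG])
      rcases List.mem_cons.mp hG with rfl | hG
      · exact hQmem.subset (filter_subset _ _)
      rcases List.mem_cons.mp hG with rfl | hG
      · exact memS2_insert_filter hQmem hu hun
      · exact h3 G (by simp [hG])
    · have hACQ : A ∪ C = insert n Q := by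
        ext x
        simp only [hC', mem_union, mem_insert, hA, hB, mem_filter]
        constructor
        · rintro (h' | rfl | h')
          · exact Or.inr h'.1
          · exact Or.inl rfl
          · exact Or.inr h'.1
        · rintro (rfl | hxQ)
          · exact Or.inr (Or.inl rfl)
          · rcases hABQ x hxQ with h'' | h''
            · exact Or.inl (mem_filter.mp h'')
            · exact Or.inr (Or.inr (mem_filter.mp h''))
      rw [foldr_union_append] at h4 ⊢
      simp only [List.foldr_cons] at h4 ⊢
      rw [← h4]
      rw [← union_assoc A C, hACQ, insert_union, union_insert]
  · have hside : ∀ Q ∈ L, (∀ x ∈ Q, x < n) ∨ (∀ x ∈ Q, n < x) := by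
      intro Q hQ
      by_cases h' : ∀ x ∈ Q, x < n
      · exact Or.inl h'
      push_neg at h'
      rcases h' with ⟨u, hu, hun⟩
      have hun' : n < u := by
        rcases Nat.eq_or_lt_of_le hun with rfl | h''
        · exact absurd (h4 ▸ subset_foldr_union hQ hu) hnF
        · exact h''
      right
      intro x hx
      rcases Nat.lt_trichotomy x n with h'' | rfl | h''
      · exact absurd ⟨Q, hQ, ⟨x, hx, h''⟩, ⟨u, hu, hun'⟩⟩ hstraddle
      · exact absurd (h4 ▸ subset_foldr_union hQ hx) hnF
      · exact h''
    rcases ins_lemma hnpos L h2 h3 hside with ⟨L', hl1, hl2, hl3, hl4⟩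
    exact ⟨L', by omega, hl2, hl3, by rw [hl4, h4]⟩
/-! ### Fullness criterion: a saturated greedy structure is `S₂`-full -/

lemma full_of_greedy_struct {X : Finset ℕ} (hXne : X.Nonempty)
    (hstruct : ∀ j, j < X.min' hXne → ∃ hne : (X \ Eacc j X).Nonempty,
      (Eacc (j + 1) X).card = (Eacc j X).card + (X \ Eacc j X).min' hne) :
    ∀ n : ℕ, 0 < n → n ∉ X → ¬ MemS2 (insert n X) := by
  intro n hn hnX hmem
  have hX'ne : (insert n X).Nonempty := insert_nonempty _ _
  have hemin : (insert n X).min' hX'ne = min (X.min' hXne) n := (min'_insert n X hXne).trans (min_comm _ _)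
  have heμ : (insert n X).min' hX'ne ≤ X.min' hXne := by
    rw [hemin]; exact min_le_left _ _
  have hBexh : Eacc ((insert n X).min' hX'ne) (insert n X) = insert n X :=
    eacc_exhausts hmem hX'ne
  have key : ∀ j, j ≤ X.min' hXne →
      ((Eacc j (insert n X)).erase n).card ≤ (Eacc j X).card ∧
      (n ∈ Eacc j (insert n X) →
        ((Eacc j (insert n X)).erase n).card + 1 ≤ (Eacc j X).card) := by
    intro j hj
    induction j with
    | zero => simp [Eacc]
    | succ j ih =>
      have hjμ : j < X.min' hXne := hj
      rcases ih (Nat.le_of_succ_le hj) with ⟨ih1, ih2⟩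
      rcases hstruct j hjμ with ⟨hremne, hcardeq⟩
      have hSX : (Eacc j (insert n X)).erase n ⊆ X := by
        intro x hx
        rcases mem_erase.mp hx with ⟨hxn, hxB⟩
        rcases mem_insert.mp (Eacc_subset j (insert n X) hxB) with rfl | h'
        · exact absurd rfl hxn
        · exact h'
      have hSinit : InitSeg ((Eacc j (insert n X)).erase n) X := by
        refine ⟨hSX, fun u hu v hv => ?_⟩
        rcases mem_sdiff.mp hv with ⟨hvX, hvS⟩
        have hvn : v ≠ n := fun hh => hnX (hh ▸ hvX)
        have hvB : v ∉ Eacc j (insert n X) := fun hh => hvS (mem_erase.mpr ⟨hvn, hh⟩)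
        exact (Eacc_initSeg j (insert n X)).2 u (erase_subset _ _ hu) v
          (mem_sdiff.mpr ⟨mem_insert_of_mem hvX, hvB⟩)
      have hSA : (Eacc j (insert n X)).erase n ⊆ Eacc j X :=
        hSinit.subset_of_card_le (Eacc_initSeg j X) ih1
      by_cases hBfull : insert n X \ Eacc j (insert n X) = ∅
      · have hstep : Eacc (j + 1) (insert n X) = Eacc j (insert n X) := by
          rw [Eacc_succ, hBfull, E1_empty, union_empty]
        rw [hstep]
        constructor
        · calc ((Eacc j (insert n X)).erase n).card ≤ (Eacc j X).card := ih1
            _ ≤ (Eacc (j + 1) X).card := by rw [hcardeq]; omega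
        · intro hnB
          calc ((Eacc j (insert n X)).erase n).card + 1 ≤ (Eacc j X).card := ih2 hnB
            _ ≤ (Eacc (j + 1) X).card := by rw [hcardeq]; omega
      · have hremne' : (insert n X \ Eacc j (insert n X)).Nonempty :=
          nonempty_iff_ne_empty.mpr hBfull
        have hXSsub : X \ (Eacc j (insert n X)).erase n ⊆ insert n X \ Eacc j (insert n X) := by
          intro x hx
          rcases mem_sdiff.mp hx with ⟨hxX, hxS⟩
          have hxn : x ≠ n := fun hh => hnX (hh ▸ hxX)
          exact mem_sdiff.mpr ⟨mem_insert_of_mem hxX,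
            fun hh => hxS (mem_erase.mpr ⟨hxn, hh⟩)⟩
        have hXSne : (X \ (Eacc j (insert n X)).erase n).Nonempty :=
          hremne.mono (sdiff_subset_sdiff subset_rfl hSA)
        have hminle : (insert n X \ Eacc j (insert n X)).min' hremne' ≤
            (X \ Eacc j X).min' hremne := by
          calc (insert n X \ Eacc j (insert n X)).min' hremne'
              ≤ (X \ (Eacc j (insert n X)).erase n).min' hXSne :=
                min'_le_min' hXSsub hXSne
            _ ≤ (X \ Eacc j X).min' hremne := min'_le _ _ (mem_sdiff.mpr
                ⟨(mem_sdiff.mp (min'_mem _ hremne)).1,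
                 fun hh => (mem_sdiff.mp (min'_mem _ hremne)).2 (hSA hh)⟩)
        have hpiece : (E1 (insert n X \ Eacc j (insert n X))).card ≤
            (X \ Eacc j X).min' hremne := by
          rw [E1_card _ hremne']
          omega
        have hdisj : Disjoint ((Eacc j (insert n X)).erase n)
            ((E1 (insert n X \ Eacc j (insert n X))).erase n) := by
          apply Finset.disjoint_left.mpr
          intro x hx hx'
          exact (mem_sdiff.mp (E1_subset _ (erase_subset _ _ hx'))).2 (erase_subset _ _ hx)
        have hcard' : ((Eacc (j + 1) (insert n X)).erase n).card =
            ((Eacc j (insert n X)).erase n).card +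
            ((E1 (insert n X \ Eacc j (insert n X))).erase n).card := by
          rw [Eacc_succ, erase_union_distrib, card_union_of_disjoint hdisj]
        by_cases hnB : n ∈ Eacc j (insert n X)
        · have hnp : n ∉ E1 (insert n X \ Eacc j (insert n X)) :=
            fun hh => (mem_sdiff.mp (E1_subset _ hh)).2 hnB
          have he1 : ((E1 (insert n X \ Eacc j (insert n X))).erase n).card =
              (E1 (insert n X \ Eacc j (insert n X))).card := by
            rw [erase_eq_of_notMem hnp]
          have h2 := ih2 hnB
          constructor
          · rw [hcard', he1, hcardeq]; omega
          · intro _; rw [hcard', he1, hcardeq]; omega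
        · by_cases hnp : n ∈ E1 (insert n X \ Eacc j (insert n X))
          · have he1 : ((E1 (insert n X \ Eacc j (insert n X))).erase n).card =
                (E1 (insert n X \ Eacc j (insert n X))).card - 1 := by
              rw [card_erase_of_mem hnp]
            have hpos : 0 < (E1 (insert n X \ Eacc j (insert n X))).card :=
              card_pos.mpr ⟨n, hnp⟩
            constructor
            · rw [hcard', he1, hcardeq]; omega
            · intro _; rw [hcard', he1, hcardeq]; omega
          · have he1 : ((E1 (insert n X \ Eacc j (insert n X))).erase n).card =
                (E1 (insert n X \ Eacc j (insert n X))).card := by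
              rw [erase_eq_of_notMem hnp]
            constructor
            · rw [hcard', he1, hcardeq]; omega
            · intro hmem'
              rw [Eacc_succ, mem_union] at hmem'
              rcases hmem' with h' | h'
              · exact absurd h' hnB
              · exact absurd h' hnp
  rcases key ((insert n X).min' hX'ne) heμ with ⟨_, k2⟩
  have hnmem : n ∈ Eacc ((insert n X).min' hX'ne) (insert n X) := by
    rw [hBexh]; exact mem_insert_self n X
  have h1 := k2 hnmem
  rw [hBexh] at h1
  have h2 : ((insert n X).erase n).card = X.card := by rw [erase_insert hnX]
  have h3 : (Eacc ((insert n X).min' hX'ne) X).card ≤ X.card :=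
    card_le_card (Eacc_subset _ X)
  omega
/-! ### The greedy `S₂`-piece of a non-`S₂` set is `S₂`-full -/

lemma min'_congr {s t : Finset ℕ} (h : s = t) {hs : s.Nonempty} {ht : t.Nonempty} :
    s.min' hs = t.min' ht := by subst h; rfl

lemma piece_is_full {R : Finset ℕ} (hpos : ∀ x ∈ R, 0 < x) (hR : ¬ MemS2 R) :
    IsFull MemS2 (E1star R) := by
  have hRne : R.Nonempty := by
    rcases R.eq_empty_or_nonempty with rfl | h
    · exact absurd MemS2_empty hR
    · exact h
  have hPdef : E1star R = Eacc (R.min' hRne) R := E1star_of_not_mem hR hRne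
  have hPne2 : E1star R ≠ R := not_memS2_E1star_ne hpos hR
  have hproper : (R \ Eacc (R.min' hRne) R).Nonempty := by
    rw [sdiff_nonempty]
    intro hsub
    exact hPne2 (hPdef ▸ Subset.antisymm (Eacc_subset _ _) hsub)
  have hμpos : 1 ≤ R.min' hRne := hpos _ (min'_mem _ _)
  -- remainders along the way are nonempty and the greedy steps are uncapped
  have hremne : ∀ j ≤ R.min' hRne, (R \ Eacc j R).Nonempty := fun j hj =>
    hproper.mono (sdiff_subset_sdiff subset_rfl (Eacc_mono hj R))
  have huncap : ∀ j (hj : j < R.min' hRne),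
      (R \ Eacc j R).min' (hremne j hj.le) ≤ (R \ Eacc j R).card := by
    intro j hj
    by_contra hcap
    push_neg at hcap
    have : E1 (R \ Eacc j R) = R \ Eacc j R :=
      E1_eq_self_of_card_le _ (hremne j hj.le) hcap.le
    have hfull : Eacc (j + 1) R = R := by
      rw [Eacc_succ, this]
      apply Subset.antisymm (union_subset (Eacc_subset _ _) sdiff_subset)
      intro x hx
      by_cases h' : x ∈ Eacc j R
      · exact mem_union_left _ h'
      · exact mem_union_right _ (mem_sdiff.mpr ⟨hx, h'⟩)
    have := Eacc_stable hj R hfull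
    rcases hremne (R.min' hRne) le_rfl with ⟨x, hx⟩
    rw [this] at hx
    simp at hx
  have hE1card : ∀ j (hj : j < R.min' hRne),
      (E1 (R \ Eacc j R)).card = (R \ Eacc j R).min' (hremne j hj.le) := by
    intro j hj
    rw [E1_card _ (hremne j hj.le)]
    have := huncap j hj
    omega
  have hgrow : ∀ j (hj : j < R.min' hRne),
      (Eacc (j + 1) R).card = (Eacc j R).card + (R \ Eacc j R).min' (hremne j hj.le) := by
    intro j hj
    rw [Eacc_card_succ, hE1card j hj]
  have hgrow1 : ∀ j, j < R.min' hRne → (Eacc j R).card + 1 ≤ (Eacc (j + 1) R).card := by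
    intro j hj
    rw [hgrow j hj]
    have : 0 < (R \ Eacc j R).min' (hremne j hj.le) :=
      hpos _ (mem_sdiff.mp (min'_mem _ _)).1
    omega
  have hcardlt : ∀ j, j < R.min' hRne → (Eacc j R).card < (Eacc (R.min' hRne) R).card := by
    intro j hj
    have : ∀ k, j + k ≤ R.min' hRne → (Eacc j R).card + 1 ≤ (Eacc (j + k) R).card ∨ k = 0 := by
      intro k
      induction k with
      | zero => intro _; exact Or.inr rfl
      | succ k ih =>
        intro hk
        left
        rw [show j + (k + 1) = j + k + 1 by omega]
        rcases ih (by omega) with h' | rfl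
        · have h'' : (Eacc (j + k) R).card ≤ (Eacc (j + k + 1) R).card :=
            card_le_card (Eacc_mono_succ _ _)
          omega
        · simpa using hgrow1 j hj
    rcases this (R.min' hRne - j) (by omega) with h' | h'
    · have : j + (R.min' hRne - j) = R.min' hRne := by omega
      rw [this] at h'
      omega
    · omega
  set P := Eacc (R.min' hRne) R with hP
  have hPinit : InitSeg P R := Eacc_initSeg _ _
  have hPne : P.Nonempty := by
    have := hcardlt 0 hμpos
    simp only [Eacc, card_empty] at this
    exact card_pos.mp (by omega)
  have hminP : P.min' hPne = R.min' hRne := by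
    rw [← hPinit.min'_eq hPne]
  -- transfer: the greedy runs on `P` and on `R` agree up to `min' R`
  have htrans : ∀ j, j ≤ R.min' hRne → Eacc j P = Eacc j R := by
    intro j hj
    induction j with
    | zero => rfl
    | succ j ih =>
      have hj' : j < R.min' hRne := hj
      have hSS := ih hj'.le
      have hsubP : Eacc j R ⊆ P := Eacc_mono hj'.le R
      have hPSne : (P \ Eacc j R).Nonempty := by
        rw [sdiff_nonempty]
        intro hsub
        have h1 := card_le_card hsub
        have h2 := hcardlt j hj'
        omega
      have hE1P : E1 (R \ Eacc j R) ⊆ P \ Eacc j R := by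
        intro x hx
        have h1 : x ∈ Eacc (j + 1) R := mem_union_right _ hx
        exact mem_sdiff.mpr ⟨Eacc_mono hj R h1, (mem_sdiff.mp (E1_subset _ hx)).2⟩
      have hinit1 : InitSeg (P \ Eacc j R) (R \ Eacc j R) := by
        refine ⟨sdiff_subset_sdiff hPinit.1 subset_rfl, ?_⟩
        intro u hu v hv
        rcases mem_sdiff.mp hv with ⟨hv1, hv2⟩
        rcases mem_sdiff.mp hv1 with ⟨hvR, hvE⟩
        have hvP : v ∉ P := fun hh => hv2 (mem_sdiff.mpr ⟨hh, hvE⟩)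
        exact hPinit.2 u (mem_sdiff.mp hu).1 v (mem_sdiff.mpr ⟨hvR, hvP⟩)
      have hmineq : (R \ Eacc j R).min' (hremne j hj'.le) = (P \ Eacc j R).min' hPSne :=
        hinit1.min'_eq hPSne
      have hcards : (E1 (P \ Eacc j R)).card = (E1 (R \ Eacc j R)).card := by
        rw [E1_card _ hPSne, hE1card j hj', ← hmineq]
        have h1 : (E1 (R \ Eacc j R)).card ≤ (P \ Eacc j R).card := card_le_card hE1P
        rw [hE1card j hj'] at h1
        omega
      have hE1eq : E1 (P \ Eacc j R) = E1 (R \ Eacc j R) :=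
        InitSeg.eq_of_card_eq ((E1_initSeg _).trans hinit1) (E1_initSeg _) hcards
      rw [Eacc_succ, Eacc_succ, hSS, hE1eq]
  -- structure hypotheses for `P`
  have hstruct : ∀ j, j < P.min' hPne → ∃ hne : (P \ Eacc j P).Nonempty,
      (Eacc (j + 1) P).card = (Eacc j P).card + (P \ Eacc j P).min' hne := by
    intro j hj
    rw [hminP] at hj
    have ht1 := htrans j hj.le
    have ht2 := htrans (j + 1) hj
    have hPSne : (P \ Eacc j P).Nonempty := by
      rw [ht1, sdiff_nonempty]
      intro hsub
      have h1 := card_le_card hsub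
      have h2 := hcardlt j hj
      omega
    refine ⟨hPSne, ?_⟩
    have hinit1 : InitSeg (P \ Eacc j R) (R \ Eacc j R) := by
      refine ⟨sdiff_subset_sdiff hPinit.1 subset_rfl, ?_⟩
      intro u hu v hv
      rcases mem_sdiff.mp hv with ⟨hv1, hv2⟩
      rcases mem_sdiff.mp hv1 with ⟨hvR, hvE⟩
      have hvP : v ∉ P := fun hh => hv2 (mem_sdiff.mpr ⟨hh, hvE⟩)
      exact hPinit.2 u (mem_sdiff.mp hu).1 v (mem_sdiff.mpr ⟨hvR, hvP⟩)
    have e2 : P \ Eacc j P = P \ Eacc j R := by rw [ht1]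
    have hPSne' : (P \ Eacc j R).Nonempty := e2 ▸ hPSne
    have hY : (P \ Eacc j P).min' hPSne = (R \ Eacc j R).min' (hremne j hj.le) := by
      rw [min'_congr e2 (ht := hPSne')]
      exact (hinit1.min'_eq hPSne').symm
    rw [hY, ht2, ht1, hgrow j hj]
  constructor
  · exact MemS2_E1star hpos
  · intro n hn hnP
    rw [hPdef] at hnP ⊢
    have := full_of_greedy_struct hPne hstruct n hn hnP
    rwa [hP] at this
theorem stmt19 (a b : ℕ) (hab : ¬ MemS3 (Finset.Icc a b))
    (F : Finset ℕ) (hF : FullAB MemS3 a b F) :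
    ∀ i, 1 ≤ i → i ≤ a - 1 → IsFull MemS2 (EpieceStar i F) := by
  intro i hi1 hi2
  rcases hF with ⟨hS3, hsub, haF, hmax⟩
  have ha2 : 2 ≤ a := by omega
  have hFne : F.Nonempty := ⟨a, haF⟩
  have hminF : F.min' hFne = a := by
    apply le_antisymm (min'_le _ _ haF)
    exact (mem_Icc.mp (hsub (min'_mem _ _))).1
  have hpos : ∀ x ∈ F, 0 < x := by
    intro x hx
    have := (mem_Icc.mp (hsub hx)).1
    omega
  -- there is a gap
  have hgap : ∃ n₀ ∈ Finset.Icc a b, n₀ ∉ F := by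
    by_contra h
    push_neg at h
    exact hab ((Subset.antisymm (fun x hx => h x hx) hsub) ▸ hS3)
  rcases hgap with ⟨n₀, hn₀I, hn₀F⟩
  have hn₀a : a < n₀ := by
    rcases Nat.eq_or_lt_of_le (mem_Icc.mp hn₀I).1 with rfl | h'
    · exact absurd haF hn₀F
    · exact h'
  -- the starred greedy never exhausts `F` within `a - 1` steps
  have hNE : ∀ j, j ≤ a - 1 → EaccStar j F ≠ F := by
    intro j hj heq
    have hcomb : Combine MemS2 j F := heq ▸ combine_EaccStar hpos j
    have hins : MemS3 (insert n₀ F) := by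
      apply ext_lemma (hcomb.mono hj) hFne (by rw [hminF]; exact hn₀a) hn₀F
      rw [hminF]
      omega
    exact hmax n₀ hn₀I hn₀F hins
  have hposR : ∀ x ∈ F \ EaccStar (i - 1) F, 0 < x := fun x hx =>
    hpos x (mem_sdiff.mp hx).1
  have hRnotS2 : ¬ MemS2 (F \ EaccStar (i - 1) F) := by
    intro h2
    apply hNE i hi2
    have hstep : EaccStar ((i - 1) + 1) F = F := by
      rw [EaccStar_succ, E1star_of_mem h2]
      exact union_sdiff_of_subset (EaccStar_subset _ _)
    rw [show i = (i - 1) + 1 by omega]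
    exact hstep
  exact piece_is_full hposR hRnotS2
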